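/- Let σ ≥ 0 and let B : [0, ∞) × Ω → ℝ be a jointly measurable stochastic process such that B(s) is square-integrable with E[B(s)] = 0 for every s ≥ 0 and E[B(s)·B(t)] = σ²·min(s, t) for all s, t ≥ 0. Let y* ∈ ℝ and let ν be a finite Borel measure on ℝ with ν((y*, ∞)) = 0. For y ≤ y* define Z(y)(ω) = ∫_{(y, y*]} B(ℓ − y)(ω) dν(ℓ). Then for all y₁, y₂ ≤ y*, Z(y₁) and Z(y₂) are integrable with E[Z(y₁)] = 0 and E[Z(y₁)·Z(y₂)] = σ² ∫_{(y₁, y*]} ∫_{(y₂, y*]} min(ℓ − y₁, k − y₂) dν(ℓ) dν(k). -/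

import Mathlib

open MeasureTheory ProbabilityTheory Filter Set

section aux

variable {Ω : Type*} [MeasureSpace Ω] [IsProbabilityMeasure (ℙ : Measure Ω)]

/-- pointwise bound `|a*b| ≤ (a^2+b^2)/2`. -/
private lemma abs_mul_le_half (a b : ℝ) : ‖a * b‖ ≤ (a ^ 2 + b ^ 2) / 2 := by
  rw [Real.norm_eq_abs, abs_mul]
  nlinarith [sq_nonneg (|a| - |b|), abs_nonneg a, abs_nonneg b, sq_abs a, sq_abs b]

end aux

/-- if `B` is a jointly measurable centered process with
`E[B(s)B(t)] = σ² min(s,t)` and `ν` is a finite measure vanishing on `(y*, ∞)`, then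
`Z(y) = ∫_{(y,y*]} B(ℓ - y) dν(ℓ)` is integrable, centered, and
`E[Z(y₁)Z(y₂)] = σ² ∫∫ min(ℓ - y₁, k - y₂) dν dν`. -/
theorem stmt_11
    {Ω : Type*} [MeasureSpace Ω] [IsProbabilityMeasure (ℙ : Measure Ω)]
    (σ : ℝ) (hσ : 0 ≤ σ)
    (B : ℝ → Ω → ℝ)
    (hBmeas : Measurable (fun p : ℝ × Ω => B p.1 p.2))
    (hB2 : ∀ s : ℝ, 0 ≤ s → Integrable (fun ω => (B s ω) ^ 2))
    (hBmean : ∀ s : ℝ, 0 ≤ s → (∫ ω, B s ω) = 0)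
    (hBcov : ∀ s t : ℝ, 0 ≤ s → 0 ≤ t →
      (∫ ω, B s ω * B t ω) = σ ^ 2 * min s t)
    (ystar : ℝ) (ν : Measure ℝ) [IsFiniteMeasure ν]
    (hν : ν (Set.Ioi ystar) = 0)
    (Z : ℝ → Ω → ℝ)
    (hZ : ∀ y ω, Z y ω = ∫ ℓ in Set.Ioc y ystar, B (ℓ - y) ω ∂ν) :
    ∀ y₁ y₂ : ℝ, y₁ ≤ ystar → y₂ ≤ ystar →
      Integrable (Z y₁) ∧
      (∫ ω, Z y₁ ω) = 0 ∧
      (∫ ω, Z y₁ ω * Z y₂ ω) =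
        σ ^ 2 * ∫ ℓ in Set.Ioc y₁ ystar,
          (∫ k in Set.Ioc y₂ ystar, min (ℓ - y₁) (k - y₂) ∂ν) ∂ν := by
  -- basic facts about B
  have hBs : ∀ s : ℝ, Measurable (B s) := fun s =>
    hBmeas.comp (measurable_const.prodMk measurable_id)
  have hsq : ∀ s : ℝ, 0 ≤ s → (∫ ω, (B s ω) ^ 2) = σ ^ 2 * s := by
    intro s hs
    have := hBcov s s hs hs
    simpa [min_self, sq] using this
  have hIntMul : ∀ s t : ℝ, 0 ≤ s → 0 ≤ t →
      Integrable (fun ω => B s ω * B t ω) := by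
    intro s t hs ht
    refine Integrable.mono' (((hB2 s hs).add (hB2 t ht)).div_const 2)
      ((hBs s).mul (hBs t)).aestronglyMeasurable ?_
    exact Eventually.of_forall fun ω => by
      simpa using abs_mul_le_half (B s ω) (B t ω)
  have hIntB : ∀ s : ℝ, 0 ≤ s → Integrable (B s) := by
    intro s hs
    refine Integrable.mono' (((integrable_const (1:ℝ)).add (hB2 s hs)).div_const 2)
      (hBs s).aestronglyMeasurable ?_
    refine Eventually.of_forall fun ω => ?_
    have := sq_nonneg (|B s ω| - 1)
    simp only [Pi.add_apply, Real.norm_eq_abs]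
    nlinarith [sq_abs (B s ω)]
  have hIntMulBound : ∀ s t : ℝ, 0 ≤ s → 0 ≤ t →
      (∫ ω, ‖B s ω * B t ω‖) ≤ (σ ^ 2 * s + σ ^ 2 * t) / 2 := by
    intro s t hs ht
    have h1 : (∫ ω, ‖B s ω * B t ω‖) ≤ ∫ ω, ((B s ω) ^ 2 + (B t ω) ^ 2) / 2 := by
      refine integral_mono (hIntMul s t hs ht).norm
        (((hB2 s hs).add (hB2 t ht)).div_const 2) fun ω => abs_mul_le_half _ _
    have h2 : (∫ ω, ((B s ω) ^ 2 + (B t ω) ^ 2) / 2)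
        = (σ ^ 2 * s + σ ^ 2 * t) / 2 := by
      rw [integral_div, integral_add (hB2 s hs) (hB2 t ht), hsq s hs, hsq t ht]
    linarith
  intro y₁ y₂ hy₁ hy₂
  set I₁ : Set ℝ := Set.Ioc y₁ ystar with hI₁
  set I₂ : Set ℝ := Set.Ioc y₂ ystar with hI₂
  -- integrability of F y on (ν.restrict I).prod ℙ
  have hFmeas : ∀ y : ℝ, Measurable (fun p : ℝ × Ω => B (p.1 - y) p.2) := fun y =>
    hBmeas.comp ((measurable_fst.sub measurable_const).prodMk measurable_snd)
  have hFint : ∀ y : ℝ, y ≤ ystar →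
      Integrable (fun p : ℝ × Ω => B (p.1 - y) p.2)
        ((ν.restrict (Set.Ioc y ystar)).prod ℙ) := by
    intro y hy
    refine (integrable_prod_iff (hFmeas y).aestronglyMeasurable).2 ⟨?_, ?_⟩
    · filter_upwards [ae_restrict_mem measurableSet_Ioc] with ℓ hℓ
      exact hIntB _ (by linarith [hℓ.1])
    · refine Integrable.mono' (integrable_const ((1 + σ ^ 2 * (ystar - y)) / 2))
        ?_ ?_
      · exact ((hFmeas y).norm.stronglyMeasurable.integral_prod_right').aestronglyMeasurable
      · filter_upwards [ae_restrict_mem measurableSet_Ioc] with ℓ hℓ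
        have hs : (0:ℝ) ≤ ℓ - y := by linarith [hℓ.1]
        have hb : (∫ ω, ‖B (ℓ - y) ω‖) ≤ (1 + σ ^ 2 * (ℓ - y)) / 2 := by
          have h1 : (∫ ω, ‖B (ℓ - y) ω‖) ≤ ∫ ω, (1 + (B (ℓ - y) ω) ^ 2) / 2 := by
            refine integral_mono (hIntB _ hs).norm
              (((integrable_const (1:ℝ)).add (hB2 _ hs)).div_const 2) fun ω => ?_
            have := sq_nonneg (|B (ℓ - y) ω| - 1)
            rw [Real.norm_eq_abs]
            nlinarith [sq_abs (B (ℓ - y) ω)]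
          have h2 : (∫ ω, (1 + (B (ℓ - y) ω) ^ 2) / 2)
              = (1 + σ ^ 2 * (ℓ - y)) / 2 := by
            rw [integral_div, integral_add (integrable_const 1) (hB2 _ hs), hsq _ hs]
            simp
          linarith
        have hnonneg : (0:ℝ) ≤ ∫ ω, ‖B (ℓ - y) ω‖ :=
          integral_nonneg fun ω => norm_nonneg _
        have hmono : σ ^ 2 * (ℓ - y) ≤ σ ^ 2 * (ystar - y) := by
          have : (0:ℝ) ≤ σ ^ 2 := sq_nonneg σ
          nlinarith [hℓ.2]
        rw [Real.norm_eq_abs, abs_of_nonneg hnonneg]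
        linarith
  -- Part 1 : integrability of Z y₁
  have hZint : ∀ y : ℝ, y ≤ ystar → Integrable (Z y) := by
    intro y hy
    have := (hFint y hy).integral_prod_right
    refine this.congr (Eventually.of_forall fun ω => ?_)
    rw [hZ]
  -- Part 2 : mean zero
  have hmean : (∫ ω, Z y₁ ω) = 0 := by
    have hswap := integral_integral_swap (f := fun ℓ ω => B (ℓ - y₁) ω)
      (μ := ν.restrict I₁) (ν := ℙ) (hFint y₁ hy₁)
    have h1 : (∫ ω, Z y₁ ω) = ∫ ω, ∫ ℓ in I₁, B (ℓ - y₁) ω ∂ν := by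
      simp_rw [hZ]
      rfl
    rw [h1, ← hswap]
    have : ∀ᵐ ℓ ∂(ν.restrict I₁), (∫ ω, B (ℓ - y₁) ω) = 0 := by
      filter_upwards [ae_restrict_mem measurableSet_Ioc] with ℓ hℓ
      exact hBmean _ (by linarith [hℓ.1])
    rw [integral_congr_ae this, integral_zero]
  refine ⟨hZint y₁ hy₁, hmean, ?_⟩
  -- Part 3 : covariance
  set P : Measure (ℝ × ℝ) := (ν.restrict I₁).prod (ν.restrict I₂) with hP
  have hPres : P = (ν.prod ν).restrict (I₁ ×ˢ I₂) := Measure.prod_restrict I₁ I₂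
  have haeP : ∀ᵐ p ∂P, p ∈ I₁ ×ˢ I₂ := by
    rw [hPres]
    exact ae_restrict_mem (measurableSet_Ioc.prod measurableSet_Ioc)
  have hGmeas : Measurable (fun q : (ℝ × ℝ) × Ω => B (q.1.1 - y₁) q.2 * B (q.1.2 - y₂) q.2) := by
    exact (hBmeas.comp (((measurable_fst.comp measurable_fst).sub
        measurable_const).prodMk measurable_snd)).mul
      (hBmeas.comp (((measurable_snd.comp measurable_fst).sub
        measurable_const).prodMk measurable_snd))
  have hGint : Integrable (fun q : (ℝ × ℝ) × Ω => B (q.1.1 - y₁) q.2 * B (q.1.2 - y₂) q.2)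
      (P.prod ℙ) := by
    refine (integrable_prod_iff hGmeas.aestronglyMeasurable).2 ⟨?_, ?_⟩
    · filter_upwards [haeP] with p hp
      exact hIntMul _ _ (by linarith [hp.1.1]) (by linarith [hp.2.1])
    · refine Integrable.mono'
        (integrable_const ((σ ^ 2 * (ystar - y₁) + σ ^ 2 * (ystar - y₂)) / 2)) ?_ ?_
      · exact (hGmeas.norm.stronglyMeasurable.integral_prod_right').aestronglyMeasurable
      · filter_upwards [haeP] with p hp
        have hs : (0:ℝ) ≤ p.1 - y₁ := by linarith [hp.1.1]
        have ht : (0:ℝ) ≤ p.2 - y₂ := by linarith [hp.2.1]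
        have hb := hIntMulBound _ _ hs ht
        have hnonneg : (0:ℝ) ≤ ∫ ω, ‖B (p.1 - y₁) ω * B (p.2 - y₂) ω‖ :=
          integral_nonneg fun ω => norm_nonneg _
        have hσ2 : (0:ℝ) ≤ σ ^ 2 := sq_nonneg σ
        rw [Real.norm_eq_abs, abs_of_nonneg hnonneg]
        nlinarith [hp.1.2, hp.2.2]
  -- rewrite the product Z y₁ * Z y₂ as a double integral
  have hProdEq : ∀ ω, Z y₁ ω * Z y₂ ω
      = ∫ p, B (p.1 - y₁) ω * B (p.2 - y₂) ω ∂P := by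
    intro ω
    rw [hZ, hZ, hP]
    exact (integral_prod_mul (μ := ν.restrict I₁) (ν := ν.restrict I₂)
      (fun ℓ => B (ℓ - y₁) ω) (fun k => B (k - y₂) ω)).symm
  have hswap := integral_integral_swap
    (f := fun (p : ℝ × ℝ) (ω : Ω) => B (p.1 - y₁) ω * B (p.2 - y₂) ω)
    (μ := P) (ν := ℙ) hGint
  have hstep1 : (∫ ω, Z y₁ ω * Z y₂ ω)
      = ∫ p, (∫ ω, B (p.1 - y₁) ω * B (p.2 - y₂) ω) ∂P := by
    rw [show (fun ω => Z y₁ ω * Z y₂ ω)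
      = fun ω => ∫ p, B (p.1 - y₁) ω * B (p.2 - y₂) ω ∂P from funext hProdEq]
    exact hswap.symm
  have hstep2 : (∫ p, (∫ ω, B (p.1 - y₁) ω * B (p.2 - y₂) ω) ∂P)
      = ∫ p, σ ^ 2 * min (p.1 - y₁) (p.2 - y₂) ∂P := by
    refine integral_congr_ae ?_
    filter_upwards [haeP] with p hp
    exact hBcov _ _ (by linarith [hp.1.1]) (by linarith [hp.2.1])
  -- integrability of the min kernel
  have hminInt : Integrable (fun p : ℝ × ℝ => min (p.1 - y₁) (p.2 - y₂)) P := by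
    refine Integrable.mono' (integrable_const (ystar - y₁)) ?_ ?_
    · exact ((continuous_fst.sub continuous_const).min
        (continuous_snd.sub continuous_const)).aestronglyMeasurable
    · filter_upwards [haeP] with p hp
      have h1 : (0:ℝ) < p.1 - y₁ := by linarith [hp.1.1]
      have h2 : (0:ℝ) < p.2 - y₂ := by linarith [hp.2.1]
      rw [Real.norm_eq_abs, abs_of_nonneg (le_min h1.le h2.le)]
      exact (min_le_left _ _).trans (by linarith [hp.1.2])
  have hstep3 : (∫ p, σ ^ 2 * min (p.1 - y₁) (p.2 - y₂) ∂P)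
      = σ ^ 2 * ∫ p, min (p.1 - y₁) (p.2 - y₂) ∂P := integral_const_mul _ _
  have hstep4 : (∫ p, min (p.1 - y₁) (p.2 - y₂) ∂P)
      = ∫ ℓ in I₁, (∫ k in I₂, min (ℓ - y₁) (k - y₂) ∂ν) ∂ν := by
    rw [hP]
    exact MeasureTheory.integral_prod _ hminInt
  rw [hstep1, hstep2, hstep3, hstep4]
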